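/- Let p ≥ 1 and let E₀ ⊆ V×V be a set of edges on V = {0,…,p−1} with (i,j) ∈ E₀ implying i ≠ j, and suppose there is a linear order ≺ on V such that (i,j) ∈ E₀ implies i ≺ j (so (V,E₀) is a DAG). Let t ∈ ℝ with |t| < 1, let B be an E₀-supported real p×p matrix (in particular B has zero diagonal), set A = t·I + B, let w : V → ℝ and D = diag(w). Then A is Schur stable, and the steady-state covariance Σ = ∑_{l=0}^∞ A^l D (Aᵀ)^l satisfies, for all i, j ∈ V: Σ_{ij} equals the finite sum, over all base treks between i and j, of C(x, y; t) · (B-weight of f) · (B-weight of g) · w_{r}; here a base trek between i and j consists of natural numbers x, y and a pair (f, g) where f is a walk of length x and g is a walk of length y in (V,E₀), both starting at a common vertex r (the top), with f ending at i and g ending at j (there are only finitely many base treks since (V,E₀) is a DAG), and C(x,y;t) = t^{|x−y|} · p_{x,y}(t) / (1−t²)^{x+y+1} with p_{x,y}(t) = ∑_{l=0}^{min(x,y)} t^{2l} · binom(max(x,y), min(x,y)−l) · binom(min(x,y), l). -/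

import Mathlib

open Matrix

/-- `f` is a walk of length `l` in the directed graph with edge set `E`. -/
def IsWalk {p : ℕ} (E : Finset (Fin p × Fin p)) {l : ℕ} (f : Fin (l + 1) → Fin p) : Prop :=
  ∀ s : Fin l, (f s.castSucc, f s.succ) ∈ E

instance {p : ℕ} (E : Finset (Fin p × Fin p)) {l : ℕ} (f : Fin (l + 1) → Fin p) :
    Decidable (IsWalk E f) :=
  inferInstanceAs (Decidable (∀ s : Fin l, (f s.castSucc, f s.succ) ∈ E))

/-- The `A`-weight of a walk: the product of the entries `A_{f(s+1) f(s)}`. -/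
def walkWeight {p : ℕ} (A : Matrix (Fin p) (Fin p) ℝ) {l : ℕ}
    (f : Fin (l + 1) → Fin p) : ℝ :=
  ∏ s : Fin l, A (f s.succ) (f s.castSucc)

/-- `p_{x,y}(t) = ∑_{l=0}^{min(x,y)} t^{2l} binom(max(x,y), min(x,y)−l) binom(min(x,y), l)`. -/
noncomputable def pPoly (x y : ℕ) (t : ℝ) : ℝ :=
  ∑ l ∈ Finset.range (min x y + 1),
    t ^ (2 * l) * ((max x y).choose (min x y - l) : ℝ) * ((min x y).choose l : ℝ)

/-- `C(x,y;t) = t^{|x−y|} p_{x,y}(t) / (1−t²)^{x+y+1}`. -/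
noncomputable def Ccoef (x y : ℕ) (t : ℝ) : ℝ :=
  t ^ (max x y - min x y) * pPoly x y t / (1 - t ^ 2) ^ (x + y + 1)

/-- The finite sum, over all base treks between `i` and `j` consisting of a walk of
length `x` and a walk of length `y` in `(V,E₀)` with common top, of
`C(x,y;t) · (B-weight of f) · (B-weight of g) · w_{top}`. -/
noncomputable def baseTrekSum (p : ℕ) (E₀ : Finset (Fin p × Fin p))
    (B : Matrix (Fin p) (Fin p) ℝ) (t : ℝ) (w : Fin p → ℝ) (i j : Fin p) (x y : ℕ) : ℝ :=
  ∑ f : Fin (x + 1) → Fin p, ∑ g : Fin (y + 1) → Fin p,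
    if IsWalk E₀ f ∧ IsWalk E₀ g ∧ f 0 = g 0 ∧ f (Fin.last x) = i ∧ g (Fin.last y) = j
    then Ccoef x y t * walkWeight B f * walkWeight B g * w (f 0)
    else 0

section Aux

open Finset

/-! ### Combinatorial identities -/

private lemma diff_choose : ∀ (j x y : ℕ), j ≤ x →
    ∑ k ∈ Finset.range (j+1), (-1:ℝ)^(j-k) * (j.choose k : ℝ) * (((y+k).choose x : ℕ) : ℝ)
      = ((y.choose (x-j) : ℕ) : ℝ) := by
  intro j
  induction j with
  | zero => intro x y _; simp
  | succ j ih =>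
    intro x y hjx
    obtain ⟨x, rfl⟩ : ∃ x', x = x' + 1 := ⟨x - 1, by omega⟩
    have hjx' : j ≤ x := by omega
    have hsplit : ∀ k ∈ Finset.range (j+1+1),
        (-1:ℝ)^(j+1-k) * ((j+1).choose k : ℝ) * (((y+k).choose (x+1) : ℕ) : ℝ)
          = (-1:ℝ)^(j+1-k) * (j.choose k : ℝ) * (((y+k).choose (x+1) : ℕ) : ℝ)
            + (if k = 0 then 0
               else (-1:ℝ)^(j+1-k) * (j.choose (k-1) : ℝ) * (((y+k).choose (x+1) : ℕ):ℝ)) := by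
      intro k _
      cases k with
      | zero => simp
      | succ m =>
        simp only [Nat.choose_succ_succ j m, Nat.succ_ne_zero, if_false, Nat.succ_sub_one]
        push_cast
        ring
    rw [Finset.sum_congr rfl hsplit, Finset.sum_add_distrib, Finset.sum_range_succ]
    have hA : ((-1:ℝ)^(j+1-(j+1)) * (j.choose (j+1) : ℝ) * (((y+(j+1)).choose (x+1):ℕ):ℝ)) = 0 := by
      simp [Nat.choose_succ_self]
    rw [hA, add_zero, Finset.sum_range_succ' (fun k => if k = 0 then 0
        else (-1:ℝ)^(j+1-k) * (j.choose (k-1) : ℝ) * (((y+k).choose (x+1) : ℕ):ℝ)) (j+1)]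
    simp only [eq_self_iff_true, if_true, Nat.succ_ne_zero, if_false, Nat.add_sub_cancel, add_zero]
    rw [← Finset.sum_add_distrib]
    have hterm : ∀ k ∈ Finset.range (j+1),
        ((-1:ℝ)^(j+1-k) * (j.choose k : ℝ) * (((y+k).choose (x+1) : ℕ) : ℝ)
          + (-1:ℝ)^(j+1-(k+1)) * (j.choose k : ℝ) * (((y+(k+1)).choose (x+1) : ℕ):ℝ))
        = (-1:ℝ)^(j-k) * (j.choose k : ℝ) * (((y+k).choose x : ℕ) : ℝ) := by
      intro k hk
      rw [Finset.mem_range] at hk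
      have e1 : j + 1 - k = (j - k) + 1 := by omega
      have e2 : j + 1 - (k+1) = j - k := by omega
      have e3 : y + (k+1) = (y + k) + 1 := by omega
      rw [e1, e2, e3, Nat.choose_succ_succ' (y+k) x]
      push_cast
      ring
    rw [Finset.sum_congr rfl hterm, ih x y hjx', Nat.succ_sub_succ]

private lemma nat_prod_split (x y l : ℕ) (hxy : x ≤ y) :
    l.choose x * l.choose y
      = ∑ k ∈ Finset.range (x+1), l.choose (x+y-k) * ((x+y-k).choose x) * x.choose k := by
  rcases le_or_gt x l with hxl | hxl
  · have h1 : ∀ k ∈ Finset.range (x+1),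
        l.choose (x+y-k) * ((x+y-k).choose x) * x.choose k
          = l.choose x * ((l-x).choose (y-k) * x.choose k) := by
      intro k hk
      rw [Finset.mem_range] at hk
      rcases le_or_gt (x+y-k) l with h | h
      · have hmul := Nat.choose_mul (n := l) (k := x+y-k) (s := x) (by omega)
        have e : x + y - k - x = y - k := by omega
        rw [hmul, e, mul_assoc]
      · have h0 : l.choose (x+y-k) = 0 := Nat.choose_eq_zero_of_lt h
        have h0' : (l-x).choose (y-k) = 0 := Nat.choose_eq_zero_of_lt (by omega)
        simp [h0, h0']
    rw [Finset.sum_congr rfl h1, ← Finset.mul_sum]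
    congr 1
    have hv : l.choose y = ((x + (l-x)).choose y) := by rw [Nat.add_sub_cancel' hxl]
    rw [hv, Nat.add_choose_eq, Finset.Nat.sum_antidiagonal_eq_sum_range_succ_mk]
    have hc : ∀ k ∈ Finset.range (x+1),
        (l-x).choose (y-k) * x.choose k = x.choose k * (l-x).choose (y-k) := by
      intro k _; ring
    rw [Finset.sum_congr rfl hc]
    exact (Finset.sum_subset (Finset.range_subset_range.2 (by omega : x+1 ≤ y+1))
      (fun k _ hk2 => by
        rw [Finset.mem_range] at hk2
        have : x.choose k = 0 := Nat.choose_eq_zero_of_lt (by omega)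
        simp [this])).symm
  · have h0 : l.choose x = 0 := Nat.choose_eq_zero_of_lt hxl
    rw [h0, zero_mul]
    symm
    apply Finset.sum_eq_zero
    intro k hk
    rw [Finset.mem_range] at hk
    have : l.choose (x+y-k) = 0 := Nat.choose_eq_zero_of_lt (by omega)
    simp [this]

private lemma one_sub_pow (z : ℝ) (n : ℕ) :
    (1-z)^n = ∑ i ∈ Finset.range (n+1), (-1:ℝ)^i * (n.choose i : ℝ) * z^i := by
  have h := add_pow (-z) 1 n
  rw [show (1:ℝ) - z = -z + 1 by ring, h]
  apply Finset.sum_congr rfl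
  intro m _
  rw [neg_pow]
  ring

private lemma star_identity (z : ℝ) {x y : ℕ} (hxy : x ≤ y) :
    ∑ k ∈ Finset.range (x+1),
        (((x+y-k).choose x : ℕ):ℝ) * (x.choose k : ℝ) * (z^(x-k) * (1-z)^k)
      = ∑ j ∈ Finset.range (x+1), z^j * ((y.choose (x-j) : ℕ):ℝ) * (x.choose j : ℝ) := by
  have hrefl : ∑ k ∈ Finset.range (x+1),
      (((x+y-k).choose x : ℕ):ℝ) * (x.choose k : ℝ) * (z^(x-k) * (1-z)^k)
      = ∑ k ∈ Finset.range (x+1),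
        (((y+k).choose x : ℕ):ℝ) * (x.choose k : ℝ) * (z^k * (1-z)^(x-k)) := by
    rw [← Finset.sum_range_reflect (fun k =>
      (((y+k).choose x : ℕ):ℝ) * (x.choose k : ℝ) * (z^k * (1-z)^(x-k))) (x+1)]
    apply Finset.sum_congr rfl
    intro k hk
    rw [Finset.mem_range] at hk
    have e1 : x + 1 - 1 - k = x - k := by omega
    have e2 : y + (x - k) = x + y - k := by omega
    have e3 : x - (x - k) = k := by omega
    have e4 : x.choose (x-k) = x.choose k := Nat.choose_symm (by omega)
    rw [e1, e2, e3, e4]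
  rw [hrefl]
  have hexp : ∀ k ∈ Finset.range (x+1),
      (((y+k).choose x : ℕ):ℝ) * (x.choose k : ℝ) * (z^k * (1-z)^(x-k))
        = ∑ j ∈ Finset.Ico k (x+1),
            (-1:ℝ)^(j-k) * ((((y+k).choose x : ℕ):ℝ) * (x.choose k : ℝ)
              * (((x-k).choose (j-k) : ℕ):ℝ)) * z^j := by
    intro k hk
    rw [Finset.mem_range] at hk
    rw [Finset.sum_Ico_eq_sum_range]
    have e0 : x + 1 - k = (x - k) + 1 := by omega
    rw [e0, one_sub_pow z (x-k), Finset.mul_sum, Finset.mul_sum]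
    apply Finset.sum_congr rfl
    intro i hi
    rw [Finset.mem_range] at hi
    have e1 : k + i - k = i := by omega
    rw [e1, pow_add]
    ring
  rw [Finset.sum_congr rfl hexp]
  rw [Finset.range_eq_Ico, Finset.sum_Ico_Ico_comm]
  simp only [← Finset.range_eq_Ico]
  apply Finset.sum_congr rfl
  intro j hj
  rw [Finset.mem_range] at hj
  have hjx : j ≤ x := by omega
  have htri : ∀ k ∈ Finset.range (j+1),
      (-1:ℝ)^(j-k) * ((((y+k).choose x : ℕ):ℝ) * (x.choose k : ℝ)
        * (((x-k).choose (j-k) : ℕ):ℝ)) * z^j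
      = ((x.choose j : ℝ) * z^j)
          * ((-1:ℝ)^(j-k) * (j.choose k : ℝ) * (((y+k).choose x : ℕ):ℝ)) := by
    intro k hk
    rw [Finset.mem_range] at hk
    have hmul : x.choose j * j.choose k = x.choose k * (x-k).choose (j-k) :=
      Nat.choose_mul (n := x) (by omega : k ≤ j)
    have hmulR : (x.choose k : ℝ) * (((x-k).choose (j-k) : ℕ):ℝ)
        = (x.choose j : ℝ) * (j.choose k : ℝ) := by
      exact_mod_cast congrArg (fun n : ℕ => (n : ℝ)) hmul.symm
    calc (-1:ℝ)^(j-k) * ((((y+k).choose x : ℕ):ℝ) * (x.choose k : ℝ)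
        * (((x-k).choose (j-k) : ℕ):ℝ)) * z^j
        = ((x.choose k : ℝ) * (((x-k).choose (j-k) : ℕ):ℝ))
            * ((-1:ℝ)^(j-k) * (((y+k).choose x : ℕ):ℝ)) * z^j := by ring
      _ = ((x.choose j : ℝ) * (j.choose k : ℝ))
            * ((-1:ℝ)^(j-k) * (((y+k).choose x : ℕ):ℝ)) * z^j := by rw [hmulR]
      _ = ((x.choose j : ℝ) * z^j)
            * ((-1:ℝ)^(j-k) * (j.choose k : ℝ) * (((y+k).choose x : ℕ):ℝ)) := by ring
  rw [Finset.sum_congr rfl htri, ← Finset.mul_sum, diff_choose j x y hjx]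
  ring

end Aux

section Analytic

open Finset

private lemma choose_geo_summable {z : ℝ} (hz0 : 0 ≤ z) (hz1 : z < 1) (n : ℕ) :
    Summable (fun m : ℕ => (((n+m).choose n : ℕ) : ℝ) * z^m) := by
  have hzn : ‖z‖ < 1 := by rwa [Real.norm_eq_abs, abs_of_nonneg hz0]
  have hg : Summable (fun m : ℕ => ∑ i ∈ Finset.range (n+1),
      ((n:ℝ))^(n-i) * ((n.choose i : ℕ) : ℝ) * (((m:ℝ))^i * z^m)) :=
    summable_sum (fun i _ =>
      ((summable_pow_mul_geometric_of_norm_lt_one i hzn).mul_left _))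
  apply Summable.of_nonneg_of_le _ _ hg
  · intro m
    positivity
  · intro m
    have h1 : (((n+m).choose n : ℕ) : ℝ) ≤ ((m:ℝ) + (n:ℝ))^n := by
      have h := Nat.choose_le_pow (n+m) n
      calc (((n+m).choose n : ℕ) : ℝ) ≤ (((n+m)^n : ℕ) : ℝ) := by exact_mod_cast h
        _ = ((m:ℝ) + (n:ℝ))^n := by push_cast; ring
    have h2 : ((m:ℝ) + (n:ℝ))^n * z^m = ∑ i ∈ Finset.range (n+1),
        ((n:ℝ))^(n-i) * ((n.choose i : ℕ) : ℝ) * (((m:ℝ))^i * z^m) := by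
      rw [add_pow, Finset.sum_mul]
      apply Finset.sum_congr rfl
      intro i _
      ring
    calc (((n+m).choose n : ℕ) : ℝ) * z^m ≤ ((m:ℝ)+(n:ℝ))^n * z^m :=
          mul_le_mul_of_nonneg_right h1 (pow_nonneg hz0 m)
      _ = _ := h2

private lemma choose_geo_tsum {z : ℝ} (hz0 : 0 ≤ z) (hz1 : z < 1) :
    ∀ n : ℕ, ∑' m : ℕ, (((n+m).choose n : ℕ) : ℝ) * z^m = 1 / (1-z)^(n+1) := by
  intro n
  induction n with
  | zero =>
    simp only [Nat.zero_add, Nat.choose_zero_right, Nat.cast_one, one_mul]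
    rw [tsum_geometric_of_lt_one hz0 hz1, pow_one, one_div]
  | succ n ih =>
    have hz : (1:ℝ) - z ≠ 0 := by linarith
    have hs := choose_geo_summable hz0 hz1 (n+1)
    have hsn := choose_geo_summable hz0 hz1 n
    have hpt : ∀ m : ℕ, (((n+1+m).choose (n+1) : ℕ) : ℝ)
        = (((n+m).choose n : ℕ) : ℝ) + (((n+m).choose (n+1) : ℕ) : ℝ) := by
      intro m
      have e : n+1+m = (n+m)+1 := by omega
      rw [e, Nat.choose_succ_succ' (n+m) n]
      push_cast
      ring
    have hh : Summable (fun m : ℕ => (((n+m).choose (n+1) : ℕ):ℝ) * z^m) := by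
      have he : (fun m : ℕ => (((n+m).choose (n+1) : ℕ):ℝ) * z^m)
          = fun m => (((n+1+m).choose (n+1) : ℕ):ℝ) * z^m - (((n+m).choose n : ℕ):ℝ) * z^m := by
        funext m
        rw [hpt m]
        ring
      rw [he]
      exact hs.sub hsn
    have key : ∑' m : ℕ, (((n+1+m).choose (n+1) : ℕ):ℝ) * z^m
        = (∑' m : ℕ, (((n+m).choose n : ℕ):ℝ) * z^m)
          + ∑' m : ℕ, (((n+m).choose (n+1) : ℕ):ℝ) * z^m := by
      rw [← Summable.tsum_add hsn hh]
      apply tsum_congr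
      intro m
      rw [hpt m]
      ring
    have key2 : ∑' m : ℕ, (((n+m).choose (n+1) : ℕ):ℝ) * z^m
        = z * ∑' m : ℕ, (((n+1+m).choose (n+1) : ℕ):ℝ) * z^m := by
      rw [Summable.tsum_eq_zero_add hh]
      have h0 : (((n+0).choose (n+1) : ℕ):ℝ) * z^0 = 0 := by
        simp [Nat.choose_succ_self]
      rw [h0, zero_add, ← tsum_mul_left]
      apply tsum_congr
      intro m
      have e : n + (m+1) = n+1+m := by omega
      rw [e, pow_succ]
      ring
    rw [ih] at key
    rw [key2] at key
    set S := ∑' m : ℕ, (((n+1+m).choose (n+1) : ℕ):ℝ) * z^m with hSdef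
    have hfin : S * (1-z) = 1/(1-z)^(n+1) := by
      rw [mul_sub, mul_one]
      linarith [key]
    have hS2 : S = (1/(1-z)^(n+1)) / (1-z) := (eq_div_iff hz).2 hfin
    rw [hS2, div_div, ← pow_succ]

private lemma sq_lt_one_of_abs_lt_one {t : ℝ} (ht : |t| < 1) : t^2 < 1 := by
  have h := abs_lt.1 ht
  nlinarith [h.1, h.2]

private lemma inner_summable (t : ℝ) (ht : |t| < 1) {x y n : ℕ} (hx : x ≤ n) (hy : y ≤ n) :
    Summable (fun l : ℕ => ((l.choose n : ℕ) : ℝ) * t^(l-x) * t^(l-y)) := by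
  have hz0 : (0:ℝ) ≤ t^2 := sq_nonneg t
  have hz1 : t^2 < 1 := sq_lt_one_of_abs_lt_one ht
  have hs : Summable (fun m : ℕ =>
      (t^(n-x) * t^(n-y)) * ((((n+m).choose n : ℕ):ℝ) * (t^2)^m)) :=
    (choose_geo_summable hz0 hz1 n).mul_left _
  apply (summable_nat_add_iff n).mp
  apply hs.congr
  intro m
  rw [show m+n-x = (n-x)+m from by omega, show m+n-y = (n-y)+m from by omega,
    show (m+n).choose n = (n+m).choose n from by rw [Nat.add_comm], pow_add, pow_add]
  ring

private lemma inner_tsum (t : ℝ) (ht : |t| < 1) {x y n : ℕ} (hx : x ≤ n) (hy : y ≤ n) :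
    ∑' l : ℕ, ((l.choose n : ℕ):ℝ) * t^(l-x) * t^(l-y)
      = t^(n-x) * t^(n-y) / (1-t^2)^(n+1) := by
  have hz0 : (0:ℝ) ≤ t^2 := sq_nonneg t
  have hz1 : t^2 < 1 := sq_lt_one_of_abs_lt_one ht
  have hsum := inner_summable t ht hx hy
  have h0 : ∑ l ∈ Finset.range n, ((l.choose n : ℕ):ℝ) * t^(l-x) * t^(l-y) = 0 :=
    Finset.sum_eq_zero fun l hl => by
      rw [Finset.mem_range] at hl
      rw [Nat.choose_eq_zero_of_lt hl]
      simp
  have he : ∀ m : ℕ, (((m+n).choose n : ℕ):ℝ) * t^(m+n-x) * t^(m+n-y)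
      = (t^(n-x) * t^(n-y)) * ((((n+m).choose n : ℕ):ℝ) * (t^2)^m) := fun m => by
    rw [show m+n-x = (n-x)+m from by omega, show m+n-y = (n-y)+m from by omega,
      show (m+n).choose n = (n+m).choose n from by rw [Nat.add_comm], pow_add, pow_add]
    ring
  calc ∑' l : ℕ, ((l.choose n : ℕ):ℝ) * t^(l-x) * t^(l-y)
      = (∑ l ∈ Finset.range n, ((l.choose n : ℕ):ℝ) * t^(l-x) * t^(l-y))
        + ∑' m : ℕ, (((m+n).choose n : ℕ):ℝ) * t^(m+n-x) * t^(m+n-y) :=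
        (Summable.sum_add_tsum_nat_add n hsum).symm
    _ = ∑' m : ℕ, (((m+n).choose n : ℕ):ℝ) * t^(m+n-x) * t^(m+n-y) := by
        rw [h0, zero_add]
    _ = (t^(n-x) * t^(n-y)) * ∑' m : ℕ, (((n+m).choose n : ℕ):ℝ) * (t^2)^m := by
        rw [← tsum_mul_left]
        exact tsum_congr he
    _ = t^(n-x) * t^(n-y) / (1-t^2)^(n+1) := by
        rw [choose_geo_tsum hz0 hz1 n, mul_one_div]

private lemma prod_split_real (t : ℝ) {x y : ℕ} (hxy : x ≤ y) (l : ℕ) :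
    ((l.choose x : ℕ):ℝ) * ((l.choose y : ℕ):ℝ) * (t^(l-x) * t^(l-y))
      = ∑ k ∈ Finset.range (x+1), ((((x+y-k).choose x : ℕ):ℝ) * ((x.choose k : ℕ):ℝ))
          * (((l.choose (x+y-k) : ℕ):ℝ) * t^(l-x) * t^(l-y)) := by
  have hR : ((l.choose x : ℕ):ℝ) * ((l.choose y : ℕ):ℝ)
      = ∑ k ∈ Finset.range (x+1),
          ((l.choose (x+y-k) : ℕ):ℝ) * (((x+y-k).choose x : ℕ):ℝ) * ((x.choose k : ℕ):ℝ) := by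
    exact_mod_cast congrArg (fun n : ℕ => (n:ℝ)) (nat_prod_split x y l hxy)
  calc ((l.choose x : ℕ):ℝ) * ((l.choose y : ℕ):ℝ) * (t^(l-x) * t^(l-y))
      = (∑ k ∈ Finset.range (x+1),
          ((l.choose (x+y-k) : ℕ):ℝ) * (((x+y-k).choose x : ℕ):ℝ) * ((x.choose k : ℕ):ℝ))
            * (t^(l-x) * t^(l-y)) := by rw [hR]
    _ = _ := by
        rw [Finset.sum_mul]
        exact Finset.sum_congr rfl fun k _ => by ring

private lemma Ccoef_symm (x y : ℕ) (t : ℝ) : Ccoef x y t = Ccoef y x t := by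
  unfold Ccoef pPoly
  rw [min_comm y x, max_comm y x, Nat.add_comm y x]

private lemma key_summable_le (t : ℝ) (ht : |t| < 1) {x y : ℕ} (hxy : x ≤ y) :
    Summable (fun l : ℕ =>
      ((l.choose x : ℕ):ℝ) * ((l.choose y : ℕ):ℝ) * (t^(l-x) * t^(l-y))) := by
  apply Summable.congr _ (fun l => (prod_split_real t hxy l).symm)
  apply summable_sum
  intro k hk
  rw [Finset.mem_range] at hk
  exact (inner_summable t ht (x := x) (y := y) (n := x+y-k)
    (by omega) (by omega)).mul_left _

private lemma key_tsum_le (t : ℝ) (ht : |t| < 1) {x y : ℕ} (hxy : x ≤ y) :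
    ∑' l : ℕ, ((l.choose x : ℕ):ℝ) * ((l.choose y : ℕ):ℝ) * (t^(l-x) * t^(l-y))
      = Ccoef x y t := by
  have hz0 : (0:ℝ) ≤ t^2 := sq_nonneg t
  have hz1 : t^2 < 1 := sq_lt_one_of_abs_lt_one ht
  have hu : (1:ℝ) - t^2 ≠ 0 := by linarith
  have hmin : min x y = x := min_eq_left hxy
  have hmax : max x y = y := max_eq_right hxy
  calc ∑' l : ℕ, ((l.choose x : ℕ):ℝ) * ((l.choose y : ℕ):ℝ) * (t^(l-x) * t^(l-y))
      = ∑' l : ℕ, ∑ k ∈ Finset.range (x+1),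
          ((((x+y-k).choose x : ℕ):ℝ) * ((x.choose k : ℕ):ℝ))
            * (((l.choose (x+y-k) : ℕ):ℝ) * t^(l-x) * t^(l-y)) :=
        tsum_congr (fun l => prod_split_real t hxy l)
    _ = ∑ k ∈ Finset.range (x+1), ∑' l : ℕ,
          ((((x+y-k).choose x : ℕ):ℝ) * ((x.choose k : ℕ):ℝ))
            * (((l.choose (x+y-k) : ℕ):ℝ) * t^(l-x) * t^(l-y)) := by
        apply Summable.tsum_finsetSum
        intro k hk
        rw [Finset.mem_range] at hk
        exact (inner_summable t ht (x := x) (y := y) (n := x+y-k)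
          (by omega) (by omega)).mul_left _
    _ = ∑ k ∈ Finset.range (x+1),
          ((((x+y-k).choose x : ℕ):ℝ) * ((x.choose k : ℕ):ℝ))
            * (t^(x+y-k-x) * t^(x+y-k-y) / (1-t^2)^((x+y-k)+1)) := by
        apply Finset.sum_congr rfl
        intro k hk
        rw [Finset.mem_range] at hk
        rw [tsum_mul_left, inner_tsum t ht (by omega) (by omega)]
    _ = ∑ k ∈ Finset.range (x+1),
          ((((x+y-k).choose x : ℕ):ℝ) * ((x.choose k : ℕ):ℝ)
            * (t^(y-k) * t^(x-k) * (1-t^2)^k)) / (1-t^2)^(x+y+1) := by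
        apply Finset.sum_congr rfl
        intro k hk
        rw [Finset.mem_range] at hk
        rw [show x+y-k-x = y-k from by omega, show x+y-k-y = x-k from by omega]
        have hp : (1-t^2)^(x+y+1) = (1-t^2)^(x+y-k+1) * (1-t^2)^k := by
          rw [← pow_add]
          congr 1
          omega
        rw [hp]
        field_simp
    _ = (∑ k ∈ Finset.range (x+1),
          (((x+y-k).choose x : ℕ):ℝ) * ((x.choose k : ℕ):ℝ)
            * (t^(y-k) * t^(x-k) * (1-t^2)^k)) / (1-t^2)^(x+y+1) := by
        rw [Finset.sum_div]
    _ = (t^(y-x) * pPoly x y t) / (1-t^2)^(x+y+1) := by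
        congr 1
        calc ∑ k ∈ Finset.range (x+1),
            (((x+y-k).choose x : ℕ):ℝ) * ((x.choose k : ℕ):ℝ)
              * (t^(y-k) * t^(x-k) * (1-t^2)^k)
            = t^(y-x) * ∑ k ∈ Finset.range (x+1),
                (((x+y-k).choose x : ℕ):ℝ) * ((x.choose k : ℕ):ℝ)
                  * ((t^2)^(x-k) * (1-t^2)^k) := by
              rw [Finset.mul_sum]
              apply Finset.sum_congr rfl
              intro k hk
              rw [Finset.mem_range] at hk
              have hp : t^(y-k) * t^(x-k) = t^(y-x) * (t^2)^(x-k) := by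
                rw [← pow_add, ← pow_mul, ← pow_add]
                congr 1
                omega
              calc (((x+y-k).choose x : ℕ):ℝ) * ((x.choose k : ℕ):ℝ)
                  * (t^(y-k) * t^(x-k) * (1-t^2)^k)
                  = (t^(y-k) * t^(x-k)) * ((((x+y-k).choose x : ℕ):ℝ)
                      * ((x.choose k : ℕ):ℝ) * (1-t^2)^k) := by ring
                _ = (t^(y-x) * (t^2)^(x-k)) * ((((x+y-k).choose x : ℕ):ℝ)
                      * ((x.choose k : ℕ):ℝ) * (1-t^2)^k) := by rw [hp]
                _ = t^(y-x) * ((((x+y-k).choose x : ℕ):ℝ) * ((x.choose k : ℕ):ℝ)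
                      * ((t^2)^(x-k) * (1-t^2)^k)) := by ring
          _ = t^(y-x) * ∑ j ∈ Finset.range (x+1),
                (t^2)^j * ((y.choose (x-j) : ℕ):ℝ) * ((x.choose j : ℕ):ℝ) := by
              rw [star_identity (t^2) hxy]
          _ = t^(y-x) * pPoly x y t := by
              unfold pPoly
              rw [hmin, hmax]
              congr 1
              apply Finset.sum_congr rfl
              intro j _
              rw [pow_mul]
    _ = Ccoef x y t := by
        unfold Ccoef
        rw [hmin, hmax]

private lemma key_summable (t : ℝ) (ht : |t| < 1) (x y : ℕ) :
    Summable (fun l : ℕ =>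
      ((l.choose x : ℕ):ℝ) * ((l.choose y : ℕ):ℝ) * (t^(l-x) * t^(l-y))) := by
  rcases le_total x y with h | h
  · exact key_summable_le t ht h
  · exact (key_summable_le t ht h).congr (fun l => by ring)

private lemma key_tsum (t : ℝ) (ht : |t| < 1) (x y : ℕ) :
    ∑' l : ℕ, ((l.choose x : ℕ):ℝ) * ((l.choose y : ℕ):ℝ) * (t^(l-x) * t^(l-y))
      = Ccoef x y t := by
  rcases le_total x y with h | h
  · exact key_tsum_le t ht h
  · rw [Ccoef_symm, ← key_tsum_le t ht h]
    exact tsum_congr fun l => by ring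

end Analytic

section MatrixAux

open Finset

variable {p : ℕ}

private lemma Bpow_eq_zero (E₀ : Finset (Fin p × Fin p))
    (hdag : ∃ lt : Fin p → Fin p → Prop, IsStrictTotalOrder (Fin p) lt ∧
      ∀ i j : Fin p, (i, j) ∈ E₀ → lt i j)
    (B : Matrix (Fin p) (Fin p) ℝ) (hB : ∀ i j : Fin p, (i, j) ∉ E₀ → B j i = 0) :
    ∀ x : ℕ, p ≤ x → B ^ x = 0 := by
  classical
  obtain ⟨lt, hsto, hlt⟩ := hdag
  haveI := hsto.toIsStrictOrder.toIsTrans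
  haveI := hsto.toIsStrictOrder.toIrrefl
  have htrans : ∀ a b c : Fin p, lt a b → lt b c → lt a c :=
    fun a b c hab hbc => IsTrans.trans a b c hab hbc
  have hirr : ∀ a : Fin p, ¬ lt a a := fun a => Std.Irrefl.irrefl a
  set ρ : Fin p → ℕ := fun v => (Finset.univ.filter (fun u => lt u v)).card with hρ
  have hmono : ∀ a b : Fin p, lt a b → ρ a < ρ b := by
    intro a b hab
    apply Finset.card_lt_card
    rw [Finset.ssubset_iff_of_subset]
    · exact ⟨a, by simp [Finset.mem_filter, hab], by simp [Finset.mem_filter, hirr a]⟩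
    · intro u hu
      rw [Finset.mem_filter] at hu ⊢
      exact ⟨hu.1, htrans u a b hu.2 hab⟩
  have hbnd : ∀ v : Fin p, ρ v < p := by
    intro v
    have hss : (Finset.univ.filter (fun u => lt u v)) ⊂ Finset.univ := by
      rw [Finset.ssubset_iff_of_subset (Finset.subset_univ _)]
      exact ⟨v, Finset.mem_univ v, by simp [Finset.mem_filter, hirr v]⟩
    have h2 := Finset.card_lt_card hss
    simpa [Finset.card_univ] using h2
  have hkey : ∀ (n : ℕ) (a b : Fin p), (B ^ n) a b ≠ 0 → ρ b + n ≤ ρ a := by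
    intro n
    induction n with
    | zero =>
      intro a b h
      rw [pow_zero] at h
      have hab : a = b := by
        by_contra hne
        exact h (Matrix.one_apply_ne hne)
      rw [hab]
      omega
    | succ n ihn =>
      intro a b h
      rw [pow_succ, Matrix.mul_apply] at h
      obtain ⟨k, _, hk⟩ := Finset.exists_ne_zero_of_sum_ne_zero h
      have h1 : (B ^ n) a k ≠ 0 := fun hz => hk (by rw [hz, zero_mul])
      have h2 : B k b ≠ 0 := fun hz => hk (by rw [hz, mul_zero])
      have hE : (b, k) ∈ E₀ := by
        by_contra hne
        exact h2 (hB b k hne)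
      have hm := hmono b k (hlt b k hE)
      have hi := ihn a k h1
      omega
  intro x hx
  ext a b
  rw [Matrix.zero_apply]
  by_contra h
  have h1 := hkey x a b h
  have h2 := hbnd a
  omega

private lemma walkWeight_eq_zero (E₀ : Finset (Fin p × Fin p)) (B : Matrix (Fin p) (Fin p) ℝ)
    (hB : ∀ i j : Fin p, (i, j) ∉ E₀ → B j i = 0) {l : ℕ} (f : Fin (l+1) → Fin p)
    (hf : ¬ IsWalk E₀ f) : walkWeight B f = 0 := by
  unfold IsWalk at hf
  push_neg at hf
  obtain ⟨s, hs⟩ := hf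
  unfold walkWeight
  exact Finset.prod_eq_zero (Finset.mem_univ s) (hB _ _ hs)

private lemma walkWeight_cons (B : Matrix (Fin p) (Fin p) ℝ) {x : ℕ} (v : Fin p)
    (g : Fin (x+1) → Fin p) :
    walkWeight B (Fin.cons v g : Fin (x+1+1) → Fin p) = B (g 0) v * walkWeight B g := by
  unfold walkWeight
  rw [Fin.prod_univ_succ]
  refine congrArg₂ (· * ·) ?_ ?_
  · simp [Fin.cons_zero, Fin.cons_succ, Fin.castSucc_zero]
  · apply Finset.prod_congr rfl
    intro s _
    rw [← Fin.succ_castSucc, Fin.cons_succ, Fin.cons_succ]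

private lemma ite_and_zero (P Q : Prop) [Decidable P] [Decidable Q] (a : ℝ) :
    (if P ∧ Q then a else 0) = if P then (if Q then a else 0) else 0 := by
  by_cases hP : P <;> by_cases hQ : Q <;> simp [hP, hQ]

private lemma pathSum (B : Matrix (Fin p) (Fin p) ℝ) :
    ∀ (x : ℕ) (i r : Fin p),
      (∑ f : Fin (x+1) → Fin p,
        if f 0 = r ∧ f (Fin.last x) = i then walkWeight B f else 0) = (B ^ x) i r := by
  intro x
  induction x with
  | zero =>
    intro i r
    rw [pow_zero, Matrix.one_apply]
    rw [Fintype.sum_equiv (Equiv.funUnique (Fin 1) (Fin p))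
      (fun f : Fin 1 → Fin p => if f 0 = r ∧ f (Fin.last 0) = i then walkWeight B f else 0)
      (fun v : Fin p => if v = r ∧ v = i then 1 else 0)
      (fun f => by
        have h0 : f (Fin.last 0) = f 0 := congrArg f (Subsingleton.elim _ _)
        have h1 : walkWeight B f = 1 := by simp [walkWeight]
        have h2 : (Equiv.funUnique (Fin 1) (Fin p)) f = f 0 := congrArg f (Subsingleton.elim _ _)
        show (if f 0 = r ∧ f (Fin.last 0) = i then walkWeight B f else 0)
            = if (Equiv.funUnique (Fin 1) (Fin p)) f = r
                ∧ (Equiv.funUnique (Fin 1) (Fin p)) f = i then (1:ℝ) else 0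
        rw [h0, h1, h2])]
    by_cases hri : r = i
    · subst hri
      simp
    · have hz : ∀ v : Fin p, (if v = r ∧ v = i then (1:ℝ) else 0) = 0 := fun v => by
        apply if_neg
        rintro ⟨rfl, rfl⟩
        exact hri rfl
      rw [Finset.sum_congr rfl (fun v _ => hz v), Finset.sum_const_zero,
        if_neg (fun h : i = r => hri h.symm)]
  | succ x ih =>
    intro i r
    rw [pow_succ, Matrix.mul_apply]
    rw [← Equiv.sum_comp (Fin.consEquiv (fun _ : Fin (x+1+1) => Fin p))
      (fun f : Fin (x+1+1) → Fin p =>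
        if f 0 = r ∧ f (Fin.last (x+1)) = i then walkWeight B f else 0)]
    rw [Fintype.sum_prod_type]
    have hterm : ∀ (v : Fin p) (g : Fin (x+1) → Fin p),
        (if (Fin.consEquiv (fun _ : Fin (x+1+1) => Fin p)) (v, g) 0 = r
            ∧ (Fin.consEquiv (fun _ : Fin (x+1+1) => Fin p)) (v, g) (Fin.last (x+1)) = i
         then walkWeight B ((Fin.consEquiv (fun _ : Fin (x+1+1) => Fin p)) (v, g)) else 0)
        = if v = r ∧ g (Fin.last x) = i then B (g 0) v * walkWeight B g else 0 := by
      intro v g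
      have hc : (Fin.consEquiv (fun _ : Fin (x+1+1) => Fin p)) (v, g)
          = (Fin.cons v g : Fin (x+1+1) → Fin p) := rfl
      rw [hc, Fin.cons_zero, ← Fin.succ_last, Fin.cons_succ, walkWeight_cons]
    rw [Finset.sum_congr rfl (fun v _ => Finset.sum_congr rfl (fun g _ => by
      exact hterm v g))]
    rw [Finset.sum_comm]
    have hcol : ∀ g : Fin (x+1) → Fin p,
        (∑ v : Fin p, if v = r ∧ g (Fin.last x) = i then B (g 0) v * walkWeight B g else 0)
          = if g (Fin.last x) = i then B (g 0) r * walkWeight B g else 0 := by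
      intro g
      rw [Finset.sum_congr rfl (fun v _ => ite_and_zero (v = r) (g (Fin.last x) = i) _),
        Finset.sum_ite_eq' Finset.univ r
          (fun v => if g (Fin.last x) = i then B (g 0) v * walkWeight B g else 0)]
      simp
    rw [Finset.sum_congr rfl (fun g _ => hcol g)]
    have hins : ∀ g : Fin (x+1) → Fin p,
        (if g (Fin.last x) = i then B (g 0) r * walkWeight B g else 0)
          = ∑ k : Fin p, if g 0 = k
              then (if g (Fin.last x) = i then B k r * walkWeight B g else 0) else 0 := by
      intro g
      rw [Finset.sum_ite_eq Finset.univ (g 0)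
        (fun k => if g (Fin.last x) = i then B k r * walkWeight B g else 0)]
      simp
    rw [Finset.sum_congr rfl (fun g _ => hins g), Finset.sum_comm]
    apply Finset.sum_congr rfl
    intro k _
    rw [← ih i k, Finset.sum_mul]
    apply Finset.sum_congr rfl
    intro g _
    by_cases h1 : g 0 = k <;> by_cases h2 : g (Fin.last x) = i <;>
      simp [h1, h2, mul_comm]

private lemma trek_eq (E₀ : Finset (Fin p × Fin p)) (B : Matrix (Fin p) (Fin p) ℝ)
    (hB : ∀ i j : Fin p, (i, j) ∉ E₀ → B j i = 0) (t : ℝ) (w : Fin p → ℝ)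
    (i j : Fin p) (x y : ℕ) :
    baseTrekSum p E₀ B t w i j x y
      = Ccoef x y t * ((B^x * Matrix.diagonal w * (B^y)ᵀ) i j) := by
  have hentry : (B^x * Matrix.diagonal w * (B^y)ᵀ) i j
      = ∑ r : Fin p, (B^x) i r * w r * (B^y) j r := by
    rw [Matrix.mul_apply]
    apply Finset.sum_congr rfl
    intro r _
    rw [Matrix.mul_diagonal, Matrix.transpose_apply]
  rw [hentry]
  unfold baseTrekSum
  have hdrop : ∀ (f : Fin (x+1) → Fin p) (g : Fin (y+1) → Fin p),
      (if IsWalk E₀ f ∧ IsWalk E₀ g ∧ f 0 = g 0 ∧ f (Fin.last x) = i ∧ g (Fin.last y) = j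
       then Ccoef x y t * walkWeight B f * walkWeight B g * w (f 0) else 0)
      = (if f 0 = g 0 ∧ f (Fin.last x) = i ∧ g (Fin.last y) = j
         then Ccoef x y t * walkWeight B f * walkWeight B g * w (f 0) else 0) := by
    intro f g
    by_cases hf : IsWalk E₀ f
    · by_cases hg : IsWalk E₀ g
      · by_cases hc : f 0 = g 0 ∧ f (Fin.last x) = i ∧ g (Fin.last y) = j <;>
          simp [hf, hg, hc]
      · have hwg : walkWeight B g = 0 := walkWeight_eq_zero E₀ B hB g hg
        simp [hg, hwg]
    · have hwf : walkWeight B f = 0 := walkWeight_eq_zero E₀ B hB f hf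
      simp [hf, hwf]
  rw [Finset.sum_congr rfl fun f _ => Finset.sum_congr rfl fun g _ => hdrop f g]
  symm
  rw [Finset.mul_sum]
  calc ∑ r : Fin p, Ccoef x y t * ((B^x) i r * w r * (B^y) j r)
      = ∑ r : Fin p,
          ((∑ f : Fin (x+1) → Fin p,
              if f 0 = r ∧ f (Fin.last x) = i then walkWeight B f else 0)
            * (∑ g : Fin (y+1) → Fin p,
              if g 0 = r ∧ g (Fin.last y) = j then walkWeight B g else 0))
            * (Ccoef x y t * w r) := by
        apply Finset.sum_congr rfl
        intro r _
        rw [pathSum B x i r, pathSum B y j r]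
        ring
    _ = ∑ r : Fin p, ∑ f : Fin (x+1) → Fin p, ∑ g : Fin (y+1) → Fin p,
          (if f 0 = r ∧ f (Fin.last x) = i then walkWeight B f else 0)
            * (if g 0 = r ∧ g (Fin.last y) = j then walkWeight B g else 0)
            * (Ccoef x y t * w r) := by
        apply Finset.sum_congr rfl
        intro r _
        rw [Finset.sum_mul_sum, Finset.sum_mul]
        apply Finset.sum_congr rfl
        intro f _
        rw [Finset.sum_mul]
    _ = ∑ f : Fin (x+1) → Fin p, ∑ r : Fin p, ∑ g : Fin (y+1) → Fin p,
          (if f 0 = r ∧ f (Fin.last x) = i then walkWeight B f else 0)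
            * (if g 0 = r ∧ g (Fin.last y) = j then walkWeight B g else 0)
            * (Ccoef x y t * w r) := Finset.sum_comm
    _ = ∑ f : Fin (x+1) → Fin p, ∑ g : Fin (y+1) → Fin p, ∑ r : Fin p,
          (if f 0 = r ∧ f (Fin.last x) = i then walkWeight B f else 0)
            * (if g 0 = r ∧ g (Fin.last y) = j then walkWeight B g else 0)
            * (Ccoef x y t * w r) :=
        Finset.sum_congr rfl (fun f _ => Finset.sum_comm)
    _ = ∑ f : Fin (x+1) → Fin p, ∑ g : Fin (y+1) → Fin p,
          (if f 0 = g 0 ∧ f (Fin.last x) = i ∧ g (Fin.last y) = j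
           then Ccoef x y t * walkWeight B f * walkWeight B g * w (f 0) else 0) := by
        apply Finset.sum_congr rfl
        intro f _
        apply Finset.sum_congr rfl
        intro g _
        have hstep : ∀ r : Fin p,
            (if f 0 = r ∧ f (Fin.last x) = i then walkWeight B f else 0)
              * (if g 0 = r ∧ g (Fin.last y) = j then walkWeight B g else 0)
              * (Ccoef x y t * w r)
            = if f 0 = r
              then (if f (Fin.last x) = i ∧ g 0 = r ∧ g (Fin.last y) = j
                then walkWeight B f * walkWeight B g * (Ccoef x y t * w r) else 0)
              else 0 := by
          intro r
          by_cases h1 : f 0 = r <;> by_cases h2 : f (Fin.last x) = i <;>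
            by_cases h3 : g 0 = r <;> by_cases h4 : g (Fin.last y) = j <;>
            simp [h1, h2, h3, h4]
        rw [Finset.sum_congr rfl (fun r _ => hstep r),
          Finset.sum_ite_eq Finset.univ (f 0)
            (fun r => if f (Fin.last x) = i ∧ g 0 = r ∧ g (Fin.last y) = j
              then walkWeight B f * walkWeight B g * (Ccoef x y t * w r) else 0)]
        simp only [Finset.mem_univ, if_true]
        have hcc : (f 0 = g 0) ↔ (g 0 = f 0) := eq_comm
        by_cases h1 : f (Fin.last x) = i <;> by_cases h2 : g 0 = f 0 <;>
          by_cases h3 : g (Fin.last y) = j <;> simp [h1, h2, h3, hcc] <;> ring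

private lemma Apow (t : ℝ) (B : Matrix (Fin p) (Fin p) ℝ) (l : ℕ) :
    (t • (1 : Matrix (Fin p) (Fin p) ℝ) + B) ^ l
      = ∑ x ∈ Finset.range (l+1), (t^(l-x) * ((l.choose x : ℕ):ℝ)) • B ^ x := by
  have hc : Commute (t • (1 : Matrix (Fin p) (Fin p) ℝ)) B := by
    unfold Commute SemiconjBy
    rw [Matrix.smul_mul, Matrix.mul_smul, one_mul, mul_one]
  rw [hc.add_pow l, ← Finset.sum_range_reflect]
  apply Finset.sum_congr rfl
  intro x hx
  rw [Finset.mem_range] at hx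
  have e1 : l + 1 - 1 - x = l - x := by omega
  have e2 : l - (l - x) = x := by omega
  rw [e1, e2, Nat.choose_symm (by omega : x ≤ l), smul_pow, one_pow,
    Matrix.smul_mul, one_mul]
  have hcast : ((l.choose x : ℕ) : Matrix (Fin p) (Fin p) ℝ)
      = ((l.choose x : ℕ):ℝ) • (1 : Matrix (Fin p) (Fin p) ℝ) := by
    calc ((l.choose x : ℕ) : Matrix (Fin p) (Fin p) ℝ)
        = algebraMap ℝ (Matrix (Fin p) (Fin p) ℝ) ((l.choose x : ℕ):ℝ) :=
          (map_natCast (algebraMap ℝ (Matrix (Fin p) (Fin p) ℝ)) (l.choose x)).symm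
      _ = ((l.choose x : ℕ):ℝ) • 1 := Algebra.algebraMap_eq_smul_one _
  rw [hcast, Matrix.mul_smul, mul_one, smul_smul,
    mul_comm ((l.choose x : ℕ):ℝ) (t^(l-x))]

private lemma MDN_entry (w : Fin p → ℝ) (M N : Matrix (Fin p) (Fin p) ℝ) (i j : Fin p) :
    (M * Matrix.diagonal w * Nᵀ) i j = ∑ r : Fin p, M i r * w r * N j r := by
  rw [Matrix.mul_apply]
  apply Finset.sum_congr rfl
  intro r _
  rw [Matrix.mul_diagonal, Matrix.transpose_apply]

private lemma entry_formula {p : ℕ} (t : ℝ) (B : Matrix (Fin p) (Fin p) ℝ)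
    (hBz : ∀ x : ℕ, p ≤ x → B ^ x = 0) (w : Fin p → ℝ) (i j : Fin p) (l : ℕ) :
    ((t • (1 : Matrix (Fin p) (Fin p) ℝ) + B) ^ l * Matrix.diagonal w
        * ((t • (1 : Matrix (Fin p) (Fin p) ℝ) + B)ᵀ) ^ l) i j
      = ∑ x ∈ Finset.range p, ∑ y ∈ Finset.range p,
          ((l.choose x : ℕ):ℝ) * ((l.choose y : ℕ):ℝ) * (t^(l-x) * t^(l-y))
            * ((B^x * Matrix.diagonal w * (B^y)ᵀ) i j) := by
  have h1 : ((t • (1 : Matrix (Fin p) (Fin p) ℝ) + B)ᵀ) ^ l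
      = ((t • (1 : Matrix (Fin p) (Fin p) ℝ) + B) ^ l)ᵀ :=
    (Matrix.transpose_pow _ l).symm
  rw [h1, MDN_entry]
  have hAe : ∀ a b : Fin p, ((t • (1 : Matrix (Fin p) (Fin p) ℝ) + B)^l) a b
      = ∑ x ∈ Finset.range (l+1), (t^(l-x) * ((l.choose x : ℕ):ℝ)) * (B^x) a b := by
    intro a b
    rw [Apow t B l, Matrix.sum_apply]
    apply Finset.sum_congr rfl
    intro x _
    rw [Matrix.smul_apply, smul_eq_mul]
  have hT3 : ∀ x y : ℕ, p ≤ x →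
      ((l.choose x : ℕ):ℝ) * ((l.choose y : ℕ):ℝ) * (t^(l-x) * t^(l-y))
        * ((B^x * Matrix.diagonal w * (B^y)ᵀ) i j) = 0 := by
    intro x y hx
    rw [hBz x hx, Matrix.zero_mul, Matrix.zero_mul, Matrix.zero_apply, mul_zero]
  have hT4 : ∀ x y : ℕ, p ≤ y →
      ((l.choose x : ℕ):ℝ) * ((l.choose y : ℕ):ℝ) * (t^(l-x) * t^(l-y))
        * ((B^x * Matrix.diagonal w * (B^y)ᵀ) i j) = 0 := by
    intro x y hy
    rw [hBz y hy, Matrix.transpose_zero, Matrix.mul_zero, Matrix.zero_apply, mul_zero]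
  have hT1 : ∀ x y : ℕ, l < x →
      ((l.choose x : ℕ):ℝ) * ((l.choose y : ℕ):ℝ) * (t^(l-x) * t^(l-y))
        * ((B^x * Matrix.diagonal w * (B^y)ᵀ) i j) = 0 := by
    intro x y hx
    rw [Nat.choose_eq_zero_of_lt hx]
    simp
  have hT2 : ∀ x y : ℕ, l < y →
      ((l.choose x : ℕ):ℝ) * ((l.choose y : ℕ):ℝ) * (t^(l-x) * t^(l-y))
        * ((B^x * Matrix.diagonal w * (B^y)ᵀ) i j) = 0 := by
    intro x y hy
    rw [Nat.choose_eq_zero_of_lt hy]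
    simp
  calc ∑ r : Fin p, ((t • (1 : Matrix (Fin p) (Fin p) ℝ) + B)^l) i r * w r
        * ((t • (1 : Matrix (Fin p) (Fin p) ℝ) + B)^l) j r
      = ∑ r : Fin p, ∑ x ∈ Finset.range (l+1), ∑ y ∈ Finset.range (l+1),
          (t^(l-x) * ((l.choose x : ℕ):ℝ)) * (B^x) i r * w r
            * ((t^(l-y) * ((l.choose y : ℕ):ℝ)) * (B^y) j r) := by
        apply Finset.sum_congr rfl
        intro r _
        rw [hAe i r, hAe j r, Finset.sum_mul, Finset.sum_mul_sum]
    _ = ∑ x ∈ Finset.range (l+1), ∑ y ∈ Finset.range (l+1),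
          ((l.choose x : ℕ):ℝ) * ((l.choose y : ℕ):ℝ) * (t^(l-x) * t^(l-y))
            * ((B^x * Matrix.diagonal w * (B^y)ᵀ) i j) := by
        rw [Finset.sum_comm]
        apply Finset.sum_congr rfl
        intro x _
        rw [Finset.sum_comm]
        apply Finset.sum_congr rfl
        intro y _
        rw [MDN_entry, Finset.mul_sum]
        apply Finset.sum_congr rfl
        intro r _
        ring
    _ = ∑ x ∈ Finset.range (max (l+1) p), ∑ y ∈ Finset.range (max (l+1) p),
          ((l.choose x : ℕ):ℝ) * ((l.choose y : ℕ):ℝ) * (t^(l-x) * t^(l-y))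
            * ((B^x * Matrix.diagonal w * (B^y)ᵀ) i j) := by
        rw [← Finset.sum_subset (Finset.range_subset_range.2 (le_max_left (l+1) p))
          (fun x _ hx => Finset.sum_eq_zero (fun y _ => hT1 x y
            (by simp only [Finset.mem_range, not_lt] at hx; omega)))]
        apply Finset.sum_congr rfl
        intro x _
        exact Finset.sum_subset (Finset.range_subset_range.2 (le_max_left (l+1) p))
          (fun y _ hy => hT2 x y (by simp only [Finset.mem_range, not_lt] at hy; omega))
    _ = ∑ x ∈ Finset.range p, ∑ y ∈ Finset.range p,
          ((l.choose x : ℕ):ℝ) * ((l.choose y : ℕ):ℝ) * (t^(l-x) * t^(l-y))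
            * ((B^x * Matrix.diagonal w * (B^y)ᵀ) i j) := by
        rw [← Finset.sum_subset (Finset.range_subset_range.2 (le_max_right (l+1) p))
          (fun x _ hx => Finset.sum_eq_zero (fun y _ => hT3 x y
            (by simp only [Finset.mem_range, not_lt] at hx; omega)))]
        apply Finset.sum_congr rfl
        intro x _
        exact (Finset.sum_subset (Finset.range_subset_range.2 (le_max_right (l+1) p))
          (fun y _ hy => hT4 x y (by simp only [Finset.mem_range, not_lt] at hy; omega))).symm

end MatrixAux

/-- Restricted trek rule for DAGs with constant self-loop parameter:
`A = t·I + B` is Schur stable and the steady-state covariance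
`Σ = ∑_{l=0}^∞ A^l D (Aᵀ)^l` (with `D = diag(w)`) is given by the base trek rule. -/
theorem stmt_4 (p : ℕ) (hp : 1 ≤ p) (E₀ : Finset (Fin p × Fin p))
    (hirr : ∀ i j : Fin p, (i, j) ∈ E₀ → i ≠ j)
    (hdag : ∃ lt : Fin p → Fin p → Prop, IsStrictTotalOrder (Fin p) lt ∧
      ∀ i j : Fin p, (i, j) ∈ E₀ → lt i j)
    (t : ℝ) (ht : |t| < 1)
    (B : Matrix (Fin p) (Fin p) ℝ) (hB : ∀ i j : Fin p, (i, j) ∉ E₀ → B j i = 0)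
    (w : Fin p → ℝ) :
    (∀ μ ∈ spectrum ℂ ((t • (1 : Matrix (Fin p) (Fin p) ℝ) + B).map (algebraMap ℝ ℂ)),
        ‖μ‖ < 1) ∧
    ∀ i j : Fin p,
      (∑' l : ℕ, (t • (1 : Matrix (Fin p) (Fin p) ℝ) + B) ^ l * Matrix.diagonal w *
          ((t • (1 : Matrix (Fin p) (Fin p) ℝ) + B)ᵀ) ^ l) i j
        = ∑' x : ℕ, ∑' y : ℕ, baseTrekSum p E₀ B t w i j x y := by
  have hBz : ∀ x : ℕ, p ≤ x → B ^ x = 0 := Bpow_eq_zero E₀ hdag B hB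
  constructor
  · -- spectrum
    intro μ hμ
    have hnil : IsNilpotent (B.map (algebraMap ℝ ℂ)) := by
      refine ⟨p, ?_⟩
      have h1 : (B.map (algebraMap ℝ ℂ))^p = (B^p).map (algebraMap ℝ ℂ) := by
        rw [← RingHom.mapMatrix_apply, ← map_pow, RingHom.mapMatrix_apply]
      rw [h1, hBz p le_rfl]
      exact Matrix.map_zero _ (map_zero _)
    have hmap : (t • (1 : Matrix (Fin p) (Fin p) ℝ) + B).map (algebraMap ℝ ℂ)
        = (t:ℂ) • (1 : Matrix (Fin p) (Fin p) ℂ) + B.map (algebraMap ℝ ℂ) := by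
      ext a b
      simp only [Matrix.map_apply, Matrix.add_apply, Matrix.smul_apply, smul_eq_mul,
        Matrix.one_apply, map_add, _root_.map_mul]
      by_cases h : a = b <;> simp [h]
    rw [hmap, spectrum.mem_iff] at hμ
    have hμt : μ = (t:ℂ) := by
      by_contra hne
      apply hμ
      have hrep : algebraMap ℂ (Matrix (Fin p) (Fin p) ℂ) μ
          - ((t:ℂ) • (1 : Matrix (Fin p) (Fin p) ℂ) + B.map (algebraMap ℝ ℂ))
          = (-(B.map (algebraMap ℝ ℂ)))
            + ((μ - (t:ℂ)) • (1 : Matrix (Fin p) (Fin p) ℂ)) := by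
        rw [Algebra.algebraMap_eq_smul_one, sub_smul]
        abel
      rw [hrep]
      have hu0 : μ - (t:ℂ) ≠ 0 := sub_ne_zero.2 hne
      have hu : IsUnit ((μ - (t:ℂ)) • (1 : Matrix (Fin p) (Fin p) ℂ)) := by
        rw [← Algebra.algebraMap_eq_smul_one]
        exact (isUnit_iff_ne_zero.2 hu0).map (algebraMap ℂ (Matrix (Fin p) (Fin p) ℂ))
      have hcomm : Commute (-(B.map (algebraMap ℝ ℂ)))
          ((μ - (t:ℂ)) • (1 : Matrix (Fin p) (Fin p) ℂ)) := by
        apply Commute.neg_left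
        unfold Commute SemiconjBy
        rw [Matrix.mul_smul, mul_one, Matrix.smul_mul, one_mul]
      exact (hnil.neg).isUnit_add_right_of_commute hu hcomm
    rw [hμt]
    rw [Complex.norm_real, Real.norm_eq_abs]
    exact ht
  · intro i j
    have hentry_sum : ∀ a b : Fin p, Summable (fun l : ℕ =>
        ((t • (1 : Matrix (Fin p) (Fin p) ℝ) + B) ^ l * Matrix.diagonal w
          * ((t • (1 : Matrix (Fin p) (Fin p) ℝ) + B)ᵀ) ^ l) a b) := by
      intro a b
      apply Summable.congr _ (fun l => (entry_formula t B hBz w a b l).symm)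
      apply summable_sum
      intro x _
      apply summable_sum
      intro y _
      exact (key_summable t ht x y).mul_right _
    have hMsum : Summable (fun l : ℕ =>
        (t • (1 : Matrix (Fin p) (Fin p) ℝ) + B) ^ l * Matrix.diagonal w
          * ((t • (1 : Matrix (Fin p) (Fin p) ℝ) + B)ᵀ) ^ l) :=
      Pi.summable.mpr fun a => Pi.summable.mpr fun b => hentry_sum a b
    have h1 : (∑' l : ℕ, (t • (1 : Matrix (Fin p) (Fin p) ℝ) + B) ^ l * Matrix.diagonal w
          * ((t • (1 : Matrix (Fin p) (Fin p) ℝ) + B)ᵀ) ^ l) i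
        = ∑' l : ℕ, ((t • (1 : Matrix (Fin p) (Fin p) ℝ) + B) ^ l * Matrix.diagonal w
          * ((t • (1 : Matrix (Fin p) (Fin p) ℝ) + B)ᵀ) ^ l) i := tsum_apply hMsum
    have h2 : (∑' l : ℕ, ((t • (1 : Matrix (Fin p) (Fin p) ℝ) + B) ^ l * Matrix.diagonal w
          * ((t • (1 : Matrix (Fin p) (Fin p) ℝ) + B)ᵀ) ^ l) i) j
        = ∑' l : ℕ, ((t • (1 : Matrix (Fin p) (Fin p) ℝ) + B) ^ l * Matrix.diagonal w
          * ((t • (1 : Matrix (Fin p) (Fin p) ℝ) + B)ᵀ) ^ l) i j :=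
      tsum_apply (Pi.summable.mp hMsum i)
    rw [h1, h2]
    have hL : ∑' l : ℕ, ((t • (1 : Matrix (Fin p) (Fin p) ℝ) + B) ^ l * Matrix.diagonal w
          * ((t • (1 : Matrix (Fin p) (Fin p) ℝ) + B)ᵀ) ^ l) i j
        = ∑ x ∈ Finset.range p, ∑ y ∈ Finset.range p,
            Ccoef x y t * ((B^x * Matrix.diagonal w * (B^y)ᵀ) i j) := by
      calc ∑' l : ℕ, ((t • (1 : Matrix (Fin p) (Fin p) ℝ) + B) ^ l * Matrix.diagonal w
            * ((t • (1 : Matrix (Fin p) (Fin p) ℝ) + B)ᵀ) ^ l) i j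
          = ∑' l : ℕ, ∑ x ∈ Finset.range p, ∑ y ∈ Finset.range p,
              ((l.choose x : ℕ):ℝ) * ((l.choose y : ℕ):ℝ) * (t^(l-x) * t^(l-y))
                * ((B^x * Matrix.diagonal w * (B^y)ᵀ) i j) :=
            tsum_congr (fun l => entry_formula t B hBz w i j l)
        _ = ∑ x ∈ Finset.range p, ∑' l : ℕ, ∑ y ∈ Finset.range p,
              ((l.choose x : ℕ):ℝ) * ((l.choose y : ℕ):ℝ) * (t^(l-x) * t^(l-y))
                * ((B^x * Matrix.diagonal w * (B^y)ᵀ) i j) :=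
            Summable.tsum_finsetSum (fun x _ => summable_sum
              (fun y _ => (key_summable t ht x y).mul_right _))
        _ = ∑ x ∈ Finset.range p, ∑ y ∈ Finset.range p, ∑' l : ℕ,
              ((l.choose x : ℕ):ℝ) * ((l.choose y : ℕ):ℝ) * (t^(l-x) * t^(l-y))
                * ((B^x * Matrix.diagonal w * (B^y)ᵀ) i j) :=
            Finset.sum_congr rfl (fun x _ => Summable.tsum_finsetSum
              (fun y _ => (key_summable t ht x y).mul_right _))
        _ = ∑ x ∈ Finset.range p, ∑ y ∈ Finset.range p,
              Ccoef x y t * ((B^x * Matrix.diagonal w * (B^y)ᵀ) i j) := by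
            apply Finset.sum_congr rfl
            intro x _
            apply Finset.sum_congr rfl
            intro y _
            rw [tsum_mul_right, key_tsum t ht x y]
    have hzero_x : ∀ x : ℕ, p ≤ x → ∀ y : ℕ,
        Ccoef x y t * ((B^x * Matrix.diagonal w * (B^y)ᵀ) i j) = 0 := by
      intro x hx y
      rw [hBz x hx, Matrix.zero_mul, Matrix.zero_mul, Matrix.zero_apply, mul_zero]
    have hzero_y : ∀ y : ℕ, p ≤ y → ∀ x : ℕ,
        Ccoef x y t * ((B^x * Matrix.diagonal w * (B^y)ᵀ) i j) = 0 := by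
      intro y hy x
      rw [hBz y hy, Matrix.transpose_zero, Matrix.mul_zero, Matrix.zero_apply, mul_zero]
    have hR : ∑' x : ℕ, ∑' y : ℕ, baseTrekSum p E₀ B t w i j x y
        = ∑ x ∈ Finset.range p, ∑ y ∈ Finset.range p,
            Ccoef x y t * ((B^x * Matrix.diagonal w * (B^y)ᵀ) i j) := by
      calc ∑' x : ℕ, ∑' y : ℕ, baseTrekSum p E₀ B t w i j x y
          = ∑' x : ℕ, ∑' y : ℕ,
              Ccoef x y t * ((B^x * Matrix.diagonal w * (B^y)ᵀ) i j) :=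
            tsum_congr (fun x => tsum_congr (fun y => trek_eq E₀ B hB t w i j x y))
        _ = ∑' x : ℕ, ∑ y ∈ Finset.range p,
              Ccoef x y t * ((B^x * Matrix.diagonal w * (B^y)ᵀ) i j) :=
            tsum_congr (fun x => tsum_eq_sum (fun y hy => hzero_y y
              (by simp only [Finset.mem_range, not_lt] at hy; omega) x))
        _ = ∑ x ∈ Finset.range p, ∑ y ∈ Finset.range p,
              Ccoef x y t * ((B^x * Matrix.diagonal w * (B^y)ᵀ) i j) :=
            tsum_eq_sum (fun x hx => Finset.sum_eq_zero (fun y _ => hzero_x x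
              (by simp only [Finset.mem_range, not_lt] at hx; omega) y))
    rw [hL, hR]
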